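/- Lower bound on the improvement of the LOM policy over the greedy composite policy: fix an initial state s₀ and assume d_{π_g,s₀} s > 0 for all s ∈ S. Let η̂ = ∑_s d_{π_g,s₀} s · ∑_a π_L s a · A^{π_g} s a, let A_max = max_{s,a} |A^{π_g} s a|, and let KL = ∑_s d_{π_L,s₀} s · log(d_{π_L,s₀} s / d_{π_g,s₀} s) (with 0·log 0 = 0). Then V^{π_L} s₀ − V^{π_g} s₀ ≥ (1/(1−γ)) · η̂ − (A_max/(1−γ)) · √(2 · KL). -/

import Mathlib

open Finset

/-- `π` is a (stochastic) policy over a finite action set. -/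
def IsPolicy {S A : Type*} [Fintype A] (π : S → A → ℝ) : Prop :=
  (∀ s a, 0 ≤ π s a) ∧ ∀ s, ∑ a, π s a = 1

/-- `P` is a transition kernel over a finite state set. -/
def IsKernel {S A : Type*} [Fintype S] (P : S → A → S → ℝ) : Prop :=
  (∀ s a s', 0 ≤ P s a s') ∧ ∀ s a, ∑ s', P s a s' = 1

/-- `Q` satisfies the Bellman equation for policy `π` in the MDP `(P, r, γ)`. -/
def IsBellmanQ {S A : Type*} [Fintype S] [Fintype A]
    (P : S → A → S → ℝ) (r : S → A → ℝ) (γ : ℝ) (π : S → A → ℝ)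
    (Q : S → A → ℝ) : Prop :=
  ∀ s a, Q s a = r s a + γ * ∑ s', P s a s' * ∑ a', π s' a' * Q s' a'

/-- `QH` satisfies the hyper Bellman equation for hyper-policy `ζ`,
with hyper reward `r_H s u = ∑ a, φ u s a * r s a` and hyper transition
`P_H s u s' = ∑ a, φ u s a * P s a s'`. -/
def IsHyperBellmanQ {S A : Type*} [Fintype S] [Fintype A] {M : ℕ}
    (P : S → A → S → ℝ) (r : S → A → ℝ) (γ : ℝ)
    (φ : Fin M → S → A → ℝ) (ζ : S → Fin M → ℝ)
    (QH : S → Fin M → ℝ) : Prop :=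
  ∀ s u, QH s u = (∑ a, φ u s a * r s a) +
    γ * ∑ s', (∑ a, φ u s a * P s a s') * (∑ u', ζ s' u' * QH s' u')

/- `d` is the normalized discounted state-visitation distribution of policy `π`
started from `s₀`. -/
open Classical in
def IsVisitation {S A : Type*} [Fintype S] [Fintype A]
    (P : S → A → S → ℝ) (γ : ℝ) (π : S → A → ℝ) (s₀ : S)
    (d : S → ℝ) : Prop :=
  ∀ s', d s' = (1 - γ) * (if s' = s₀ then 1 else 0) +
    γ * ∑ s, d s * ∑ a, π s a * P s a s'

-- swap lemma
lemma mdp_swap {S A : Type*} [Fintype S] [Fintype A]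
    (π : A → ℝ) (P : A → S → ℝ) (f : S → ℝ) :
    ∑ a, π a * ∑ s', P a s' * f s' = ∑ s', (∑ a, π a * P a s') * f s' := by
  simp only [Finset.mul_sum, Finset.sum_mul]
  rw [Finset.sum_comm]
  exact Finset.sum_congr rfl fun s' _ => Finset.sum_congr rfl fun a _ => by ring

lemma visit_sum_one {S A : Type*} [Fintype S] [Fintype A]
    {P : S → A → S → ℝ} {γ : ℝ} {π : S → A → ℝ} {s₀ : S} {d : S → ℝ}
    (hP : IsKernel P) (hγ1 : γ < 1)
    (hπs : ∀ s, ∑ a, π s a = 1)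
    (hd : IsVisitation P γ π s₀ d) : ∑ s, d s = 1 := by
  classical
  have e1 : ∑ s', d s' = (1-γ) * ∑ s' : S, (if s' = s₀ then (1:ℝ) else 0)
      + γ * ∑ s' : S, ∑ s, d s * ∑ a, π s a * P s a s' := by
    rw [Finset.mul_sum, Finset.mul_sum, ← Finset.sum_add_distrib]
    exact Finset.sum_congr rfl fun s' _ => hd s'
  have e2 : ∑ s' : S, (if s' = s₀ then (1:ℝ) else 0) = 1 := by
    simp
  have e3 : ∑ s' : S, ∑ s, d s * ∑ a, π s a * P s a s' = ∑ s, d s := by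
    rw [Finset.sum_comm]
    refine Finset.sum_congr rfl fun s _ => ?_
    rw [← Finset.mul_sum]
    have : ∑ s', ∑ a, π s a * P s a s' = 1 := by
      rw [Finset.sum_comm]
      calc ∑ a, ∑ s', π s a * P s a s' = ∑ a, π s a * ∑ s', P s a s' := by
            simp [Finset.mul_sum]
        _ = ∑ a, π s a := by
            refine Finset.sum_congr rfl fun a _ => by rw [hP.2 s a, mul_one]
        _ = 1 := hπs s
    rw [this, mul_one]
  rw [e2, e3, mul_one] at e1
  have h1γ : (1:ℝ) - γ ≠ 0 := by linarith
  have : (1-γ) * ∑ s, d s = (1-γ) := by linarith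
  field_simp at this
  linarith [this]

lemma visit_nonneg {S A : Type*} [Fintype S] [Fintype A]
    {P : S → A → S → ℝ} {γ : ℝ} {π : S → A → ℝ} {s₀ : S} {d : S → ℝ}
    (hP : IsKernel P) (hγ0 : 0 ≤ γ) (hγ1 : γ < 1)
    (hπn : ∀ s a, 0 ≤ π s a) (hπs : ∀ s, ∑ a, π s a = 1)
    (hd : IsVisitation P γ π s₀ d) : ∀ s, 0 ≤ d s := by
  classical
  by_contra hcon
  push_neg at hcon
  obtain ⟨sb, hsb⟩ := hcon
  set N := Finset.univ.filter (fun s => d s < 0) with hN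
  have hmemN : ∀ s, s ∈ N ↔ d s < 0 := fun s => by simp [hN]
  have hNne : N.Nonempty := ⟨sb, (hmemN sb).2 hsb⟩
  have hσ : ∑ s ∈ N, d s < 0 := Finset.sum_neg (fun s hs => (hmemN s).1 hs) hNne
  set K : S → ℝ := fun s => ∑ s' ∈ N, ∑ a, π s a * P s a s' with hK
  have hKnn : ∀ s, 0 ≤ K s := fun s => Finset.sum_nonneg fun s' _ =>
    Finset.sum_nonneg fun a _ => mul_nonneg (hπn s a) (hP.1 s a s')
  have hKle : ∀ s, K s ≤ 1 := by
    intro s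
    have h1 : K s ≤ ∑ s' : S, ∑ a, π s a * P s a s' :=
      Finset.sum_le_sum_of_subset_of_nonneg (Finset.subset_univ N)
        (fun s' _ _ => Finset.sum_nonneg fun a _ => mul_nonneg (hπn s a) (hP.1 s a s'))
    have h2 : ∑ s' : S, ∑ a, π s a * P s a s' = 1 := by
      rw [Finset.sum_comm]
      calc ∑ a, ∑ s', π s a * P s a s' = ∑ a, π s a * ∑ s', P s a s' := by
            simp [Finset.mul_sum]
        _ = ∑ a, π s a := by
            refine Finset.sum_congr rfl fun a _ => by rw [hP.2 s a, mul_one]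
        _ = 1 := hπs s
    linarith
  have step : γ * ∑ s ∈ N, d s ≤ ∑ s' ∈ N, d s' := by
    have e1 : ∑ s' ∈ N, d s' = (1-γ) * ∑ s' ∈ N, (if s' = s₀ then (1:ℝ) else 0)
        + γ * ∑ s' ∈ N, ∑ s, d s * ∑ a, π s a * P s a s' := by
      rw [Finset.mul_sum, Finset.mul_sum, ← Finset.sum_add_distrib]
      exact Finset.sum_congr rfl fun s' _ => hd s'
    have e2 : ∑ s' ∈ N, ∑ s, d s * ∑ a, π s a * P s a s' = ∑ s, d s * K s := by
      rw [Finset.sum_comm]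
      exact Finset.sum_congr rfl fun s _ => by rw [hK, Finset.mul_sum]
    have e3 : 0 ≤ ∑ s' ∈ N, (if s' = s₀ then (1:ℝ) else 0) :=
      Finset.sum_nonneg fun s' _ => by positivity
    have e4 : ∑ s ∈ N, d s ≤ ∑ s, d s * K s := by
      have h5 : ∑ s ∈ N, d s * K s ≤ ∑ s : S, d s * K s :=
        Finset.sum_le_sum_of_subset_of_nonneg (Finset.subset_univ N)
          (fun s _ hs => by
            have hds : 0 ≤ d s := by
              by_contra hc
              exact hs ((hmemN s).2 (lt_of_not_ge hc))
            exact mul_nonneg hds (hKnn s))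
      have h6 : ∑ s ∈ N, d s ≤ ∑ s ∈ N, d s * K s :=
        Finset.sum_le_sum fun s hs => by
          have hds := (hmemN s).1 hs
          nlinarith [hKle s, hKnn s]
      linarith
    have e5 : γ * ∑ s ∈ N, d s ≤ γ * ∑ s, d s * K s :=
      mul_le_mul_of_nonneg_left e4 hγ0
    rw [e1, e2]
    nlinarith [e3]
  nlinarith [step, hσ]

lemma bellman_value {S A : Type*} [Fintype S] [Fintype A]
    {P : S → A → S → ℝ} {r : S → A → ℝ} {γ : ℝ} {π : S → A → ℝ} {Q : S → A → ℝ}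
    (hQ : IsBellmanQ P r γ π Q) (s : S) :
    ∑ a, π s a * Q s a = (∑ a, π s a * r s a)
      + γ * ∑ s', (∑ a, π s a * P s a s') * (∑ a', π s' a' * Q s' a') := by
  calc ∑ a, π s a * Q s a
      = ∑ a, (π s a * r s a + γ * (π s a * ∑ s', P s a s' * ∑ a', π s' a' * Q s' a')) := by
        refine Finset.sum_congr rfl fun a _ => ?_
        rw [hQ s a]; ring
    _ = (∑ a, π s a * r s a)
        + γ * ∑ a, π s a * ∑ s', P s a s' * ∑ a', π s' a' * Q s' a' := by
        rw [Finset.sum_add_distrib, ← Finset.mul_sum]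
    _ = _ := by rw [mdp_swap (π s) (fun a s' => P s a s') (fun s' => ∑ a', π s' a' * Q s' a')]

lemma pade_hasDeriv1 {x : ℝ} (hx : 0 < x) :
    HasDerivAt (fun t : ℝ => Real.log t - 3*(t^2-1)/(t^2+4*t+1))
      ((x-1)^4/(x*(x^2+4*x+1)^2)) x := by
  have hD : x^2+4*x+1 ≠ 0 := by nlinarith
  have h1 : HasDerivAt Real.log (1/x) x := by
    simpa [one_div] using Real.hasDerivAt_log hx.ne'
  have h2 : HasDerivAt (fun t : ℝ => 3*(t^2-1)) (3*(2*x)) x := by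
    simpa using ((hasDerivAt_pow 2 x).sub_const 1).const_mul 3
  have h3 : HasDerivAt (fun t : ℝ => t^2+4*t+1) (2*x+4) x := by
    simpa using (((hasDerivAt_pow 2 x).add ((hasDerivAt_id x).const_mul 4)).add_const 1)
  have h4 := (h2.div h3 hD)
  have h5 := h1.sub h4
  refine h5.congr_deriv ?_
  field_simp
  ring

lemma log_pade_ge_one {t : ℝ} (ht : 1 ≤ t) :
    3*(t^2-1)/(t^2+4*t+1) ≤ Real.log t := by
  have key : MonotoneOn (fun t : ℝ => Real.log t - 3*(t^2-1)/(t^2+4*t+1)) (Set.Ici 1) := by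
    apply monotoneOn_of_deriv_nonneg (convex_Ici 1)
    · intro x hx
      have hx1 : (1:ℝ) ≤ x := hx
      exact (pade_hasDeriv1 (by linarith)).differentiableAt.continuousAt.continuousWithinAt
    · intro x hx
      have hx1 : (1:ℝ) < x := by simpa [interior_Ici] using hx
      exact (pade_hasDeriv1 (by linarith)).differentiableAt.differentiableWithinAt
    · intro x hx
      have hx1 : (1:ℝ) < x := by simpa [interior_Ici] using hx
      rw [(pade_hasDeriv1 (by linarith)).deriv]
      positivity
  have h := key (Set.self_mem_Ici) (by exact ht) ht
  simp only [Real.log_one] at h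
  norm_num at h
  linarith

lemma pade_hasDeriv2 {x : ℝ} (hx : 0 < x) :
    HasDerivAt (fun t : ℝ => Real.log t - (5*t^2-4*t-1)/(2*t^2+4*t))
      (4*(x-1)^3/(2*x^2+4*x)^2) x := by
  have hD : 2*x^2+4*x ≠ 0 := by nlinarith
  have h1 : HasDerivAt Real.log (1/x) x := by
    simpa [one_div] using Real.hasDerivAt_log hx.ne'
  have h2 : HasDerivAt (fun t : ℝ => 5*t^2-4*t-1) (5*(2*x)-4) x := by
    simpa using (((hasDerivAt_pow 2 x).const_mul 5).sub ((hasDerivAt_id x).const_mul 4)).sub_const 1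
  have h3 : HasDerivAt (fun t : ℝ => 2*t^2+4*t) (2*(2*x)+4) x := by
    have := ((hasDerivAt_pow 2 x).const_mul 2).add ((hasDerivAt_id x).const_mul 4)
    simp at this
    exact this
  have h5 := h1.sub (h2.div h3 hD)
  refine h5.congr_deriv ?_
  field_simp
  ring

lemma log_pade_le_one {t : ℝ} (ht0 : 0 < t) (ht : t ≤ 1) :
    (5*t^2-4*t-1)/(2*t^2+4*t) ≤ Real.log t := by
  rcases eq_or_lt_of_le ht with h | h
  · subst h; norm_num
  have key : AntitoneOn (fun t : ℝ => Real.log t - (5*t^2-4*t-1)/(2*t^2+4*t)) (Set.Icc t 1) := by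
    apply antitoneOn_of_deriv_nonpos (convex_Icc t 1)
    · intro x hx
      have : t ≤ x := hx.1
      exact (pade_hasDeriv2 (by linarith)).differentiableAt.continuousAt.continuousWithinAt
    · intro x hx
      rw [interior_Icc] at hx
      exact (pade_hasDeriv2 (by linarith [hx.1])).differentiableAt.differentiableWithinAt
    · intro x hx
      rw [interior_Icc] at hx
      have hx0 : 0 < x := by linarith [hx.1]
      rw [(pade_hasDeriv2 hx0).deriv]
      apply div_nonpos_of_nonpos_of_nonneg
      · nlinarith [mul_nonneg (sub_nonneg.2 hx.2.le) (sq_nonneg (x-1))]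
      · positivity
  have hmem : t ∈ Set.Icc t 1 := ⟨le_refl t, ht⟩
  have hmem1 : (1:ℝ) ∈ Set.Icc t 1 := ⟨ht, le_refl 1⟩
  have hres := key hmem hmem1 ht
  simp only [Real.log_one] at hres
  norm_num at hres
  linarith

lemma scalar_pinsker {t : ℝ} (ht : 0 ≤ t) :
    3*(t-1)^2/(2*t+4) ≤ t * Real.log t - t + 1 := by
  rcases eq_or_lt_of_le ht with h | ht0
  · subst h; norm_num
  rcases le_or_gt 1 t with h1 | h1
  · have hlog := log_pade_ge_one h1
    have hmul : t * (3*(t^2-1)/(t^2+4*t+1)) ≤ t * Real.log t :=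
      mul_le_mul_of_nonneg_left hlog ht
    have hD : (0:ℝ) < t^2+4*t+1 := by nlinarith
    have h2 : (0:ℝ) < 2*t+4 := by linarith
    have key : 3*(t-1)^2/(2*t+4) ≤ t * (3*(t^2-1)/(t^2+4*t+1)) - t + 1 := by
      rw [div_le_iff₀ h2, mul_div_assoc, ← sub_nonneg]
      have : t * (3 * (t ^ 2 - 1)) / (t ^ 2 + 4 * t + 1)
          = (t * (3 * (t ^ 2 - 1))) / (t ^ 2 + 4 * t + 1) := by ring
      field_simp
      nlinarith [sq_nonneg ((t-1)^2), sq_nonneg (t-1)]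
    linarith
  · have hlog := log_pade_le_one ht0 h1.le
    have hmul : t * ((5*t^2-4*t-1)/(2*t^2+4*t)) ≤ t * Real.log t :=
      mul_le_mul_of_nonneg_left hlog ht
    have heq : t * ((5*t^2-4*t-1)/(2*t^2+4*t)) - t + 1 = 3*(t-1)^2/(2*t+4) := by
      have h2 : (2*t^2+4*t) ≠ 0 := by nlinarith
      have h3 : (2*t+4) ≠ 0 := by nlinarith
      field_simp
      ring
    linarith

lemma pointwise_pinsker {x y : ℝ} (hx : 0 ≤ x) (hy : 0 < y) :
    3*(x-y)^2/(2*x+4*y) ≤ x * Real.log (x/y) - x + y := by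
  have ht : (0:ℝ) ≤ x/y := div_nonneg hx hy.le
  have h := scalar_pinsker ht
  have h2 := mul_le_mul_of_nonneg_left h hy.le
  have e1 : y * (x/y * Real.log (x/y) - x/y + 1) = x * Real.log (x/y) - x + y := by
    field_simp
  have e2 : y * (3*(x/y-1)^2/(2*(x/y)+4)) = 3*(x-y)^2/(2*x+4*y) := by
    have hne : (2*(x/y)+4) ≠ 0 := by positivity
    field_simp
  rw [e1, e2] at h2
  exact h2

lemma sum_pinsker {S : Type*} [Fintype S] (p q : S → ℝ)
    (hp : ∀ s, 0 ≤ p s) (hq : ∀ s, 0 < q s)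
    (hps : ∑ s, p s = 1) (hqs : ∑ s, q s = 1) :
    ∑ s, |p s - q s| ≤ Real.sqrt (2 * ∑ s, p s * Real.log (p s / q s)) := by
  set w : S → ℝ := fun s => (2 * p s + 4 * q s)/3 with hw
  have hwpos : ∀ s, 0 < w s := fun s => by
    have := hp s; have := hq s; rw [hw]; positivity
  have hsw : ∑ s, w s = 2 := by
    rw [hw]; rw [← Finset.sum_div]
    rw [Finset.sum_add_distrib, ← Finset.mul_sum, ← Finset.mul_sum, hps, hqs]
    norm_num
  have cs := Finset.sum_mul_sq_le_sq_mul_sq Finset.univ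
    (fun s => |p s - q s| / Real.sqrt (w s)) (fun s => Real.sqrt (w s))
  have e3 : ∀ s : S, |p s - q s| / Real.sqrt (w s) * Real.sqrt (w s) = |p s - q s| := by
    intro s
    exact div_mul_cancel₀ _ (Real.sqrt_ne_zero'.2 (hwpos s))
  have e4 : ∀ s : S, (|p s - q s| / Real.sqrt (w s))^2 = (p s - q s)^2 / w s := by
    intro s
    rw [div_pow, sq_abs, Real.sq_sqrt (hwpos s).le]
  have e5 : ∀ s : S, (Real.sqrt (w s))^2 = w s := fun s => Real.sq_sqrt (hwpos s).le
  simp only [e3, e4, e5] at cs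
  rw [hsw] at cs
  -- pointwise bound: (p-q)^2 / w ≤ p log(p/q) - p + q
  have hpt : ∀ s : S, (p s - q s)^2 / w s ≤ p s * Real.log (p s / q s) - p s + q s := by
    intro s
    have := pointwise_pinsker (hp s) (hq s)
    have e : (p s - q s)^2 / w s = 3*(p s - q s)^2/(2 * p s + 4 * q s) := by
      rw [hw]
      rw [div_div_eq_mul_div]
      ring_nf
    rw [e]; exact this
  have hsum : ∑ s, (p s - q s)^2 / w s ≤ ∑ s, p s * Real.log (p s / q s) := by
    calc ∑ s, (p s - q s)^2 / w s
        ≤ ∑ s, (p s * Real.log (p s / q s) - p s + q s) :=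
          Finset.sum_le_sum (fun s _ => hpt s)
      _ = ∑ s, p s * Real.log (p s / q s) := by
          rw [Finset.sum_add_distrib, Finset.sum_sub_distrib, hps, hqs]; ring
  have hfin : (∑ s, |p s - q s|)^2 ≤ 2 * ∑ s, p s * Real.log (p s / q s) := by
    calc (∑ s, |p s - q s|)^2 ≤ (∑ s, (p s - q s)^2 / w s) * 2 := cs
      _ ≤ (∑ s, p s * Real.log (p s / q s)) * 2 := by
          apply mul_le_mul_of_nonneg_right hsum; norm_num
      _ = 2 * ∑ s, p s * Real.log (p s / q s) := by ring
  have habs : 0 ≤ ∑ s, |p s - q s| := Finset.sum_nonneg (fun s _ => abs_nonneg _)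
  exact Real.le_sqrt_of_sq_le hfin
lemma bellman_cross {S A : Type*} [Fintype S] [Fintype A]
    {P : S → A → S → ℝ} {r : S → A → ℝ} {γ : ℝ} {π : S → A → ℝ} {Q : S → A → ℝ}
    (hQ : IsBellmanQ P r γ π Q) (μ : S → A → ℝ) (s : S) :
    ∑ a, μ s a * Q s a = (∑ a, μ s a * r s a)
      + γ * ∑ s', (∑ a, μ s a * P s a s') * (∑ a', π s' a' * Q s' a') := by
  calc ∑ a, μ s a * Q s a
      = ∑ a, (μ s a * r s a + γ * (μ s a * ∑ s', P s a s' * ∑ a', π s' a' * Q s' a')) := by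
        refine Finset.sum_congr rfl fun a _ => ?_
        rw [hQ s a]; ring
    _ = (∑ a, μ s a * r s a)
        + γ * ∑ a, μ s a * ∑ s', P s a s' * ∑ a', π s' a' * Q s' a' := by
        rw [Finset.sum_add_distrib, ← Finset.mul_sum]
    _ = _ := by rw [mdp_swap (μ s) (fun a s' => P s a s') (fun s' => ∑ a', π s' a' * Q s' a')]


/-- lower bound on the improvement of the LOM policy over the greedy
composite policy. -/
theorem lom_improvement_lower_bound
    {S A : Type*} [Fintype S] [Fintype A] [Nonempty S] [Nonempty A]
    (P : S → A → S → ℝ) (r : S → A → ℝ) (γ : ℝ)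
    (hP : IsKernel P) (hγ0 : 0 ≤ γ) (hγ1 : γ < 1)
    {M : ℕ} (hM : 1 ≤ M)
    (φ : Fin M → S → A → ℝ) (hφ : ∀ u, IsPolicy (φ u))
    (α : S → Fin M → ℝ) (hα : IsPolicy α)
    (QHb : S → Fin M → ℝ) (hQHb : IsHyperBellmanQ P r γ φ α QHb)
    (ζg : S → Fin M) (hg : ∀ s u, QHb s u ≤ QHb s (ζg s))
    (Qg : S → A → ℝ) (hQg : IsBellmanQ P r γ (fun s a => φ (ζg s) s a) Qg)
    (Ag : S → A → ℝ) (hAg : ∀ s a, Ag s a = Qg s a - ∑ a', φ (ζg s) s a' * Qg s a')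
    (β : ℝ) (hβ : 0 < β)
    (Z : S → ℝ) (hZ : ∀ s, Z s = ∑ a', φ (ζg s) s a' * Real.exp (Ag s a' / β))
    (πL : S → A → ℝ)
    (hπL : ∀ s a, πL s a = φ (ζg s) s a * Real.exp (Ag s a / β) / Z s)
    (QL : S → A → ℝ) (hQL : IsBellmanQ P r γ πL QL)
    (s₀ : S)
    (dg : S → ℝ) (hdg : IsVisitation P γ (fun s a => φ (ζg s) s a) s₀ dg)
    (dL : S → ℝ) (hdL : IsVisitation P γ πL s₀ dL)
    (hdgpos : ∀ s, 0 < dg s)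
    (Amax : ℝ)
    (hAmax : Amax = Finset.univ.sup' Finset.univ_nonempty
      (fun p : S × A => |Ag p.1 p.2|)) :
    (∑ a, πL s₀ a * QL s₀ a) - (∑ a, φ (ζg s₀) s₀ a * Qg s₀ a)
      ≥ (1 / (1 - γ)) * (∑ s, dg s * ∑ a, πL s a * Ag s a)
        - (Amax / (1 - γ)) *
            Real.sqrt (2 * ∑ s, dL s * Real.log (dL s / dg s)) := by
  classical
  have h1γ : (0:ℝ) < 1 - γ := by linarith
  have hπg_nn : ∀ s a, 0 ≤ φ (ζg s) s a := fun s a => (hφ (ζg s)).1 s a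
  have hπg_sum : ∀ s, ∑ a, φ (ζg s) s a = 1 := fun s => (hφ (ζg s)).2 s
  have hZpos : ∀ s, 0 < Z s := by
    intro s
    rw [hZ]
    have hex : ∃ a, 0 < φ (ζg s) s a := by
      by_contra hcon
      push_neg at hcon
      have : ∑ a, φ (ζg s) s a ≤ 0 := Finset.sum_nonpos fun a _ => hcon a
      rw [hπg_sum s] at this; linarith
    obtain ⟨a, ha⟩ := hex
    exact Finset.sum_pos' (fun a _ => mul_nonneg (hπg_nn s a) (Real.exp_pos _).le)
      ⟨a, Finset.mem_univ a, mul_pos ha (Real.exp_pos _)⟩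
  have hπL_nn : ∀ s a, 0 ≤ πL s a := fun s a => by
    rw [hπL]
    exact div_nonneg (mul_nonneg (hπg_nn s a) (Real.exp_pos _).le) (hZpos s).le
  have hπL_sum : ∀ s, ∑ a, πL s a = 1 := by
    intro s
    have e : ∑ a, πL s a = (∑ a, φ (ζg s) s a * Real.exp (Ag s a / β)) / Z s := by
      rw [Finset.sum_div]
      exact Finset.sum_congr rfl fun a _ => hπL s a
    rw [e, ← hZ s, div_self (hZpos s).ne']
  have hsum_dL : ∑ s, dL s = 1 := visit_sum_one hP hγ1 hπL_sum hdL
  have hsum_dg : ∑ s, dg s = 1 := visit_sum_one hP hγ1 hπg_sum hdg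
  have hdL_nn : ∀ s, 0 ≤ dL s := visit_nonneg hP hγ0 hγ1 hπL_nn hπL_sum hdL
  set VL : S → ℝ := fun s => ∑ a, πL s a * QL s a with hVL
  set Vg : S → ℝ := fun s => ∑ a, φ (ζg s) s a * Qg s a with hVg
  set W : S → ℝ := fun s => VL s - Vg s with hW
  set T : S → ℝ := fun s => ∑ a, πL s a * Ag s a with hT
  set K : S → S → ℝ := fun s s' => ∑ a, πL s a * P s a s' with hK
  have hVLs : ∀ s, VL s = (∑ a, πL s a * r s a) + γ * ∑ s', K s s' * VL s' :=
    fun s => bellman_value hQL s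
  have hcross : ∀ s, ∑ a, πL s a * Qg s a
      = (∑ a, πL s a * r s a) + γ * ∑ s', K s s' * Vg s' :=
    fun s => bellman_cross hQg πL s
  have hTW : ∀ s, T s = W s - γ * ∑ s', K s s' * W s' := by
    intro s
    have e1 : T s = (∑ a, πL s a * Qg s a) - Vg s := by
      show (∑ a, πL s a * Ag s a) = _
      calc ∑ a, πL s a * Ag s a
          = ∑ a, (πL s a * Qg s a - πL s a * Vg s) := by
            refine Finset.sum_congr rfl fun a _ => ?_
            rw [hAg s a]; show _ = _ - πL s a * ∑ a', φ (ζg s) s a' * Qg s a'; ring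
        _ = (∑ a, πL s a * Qg s a) - (∑ a, πL s a) * Vg s := by
            rw [Finset.sum_sub_distrib, Finset.sum_mul]
        _ = (∑ a, πL s a * Qg s a) - Vg s := by rw [hπL_sum s, one_mul]
    have e2 : ∑ s', K s s' * W s' = (∑ s', K s s' * VL s') - ∑ s', K s s' * Vg s' := by
      rw [← Finset.sum_sub_distrib]
      refine Finset.sum_congr rfl fun s' _ => ?_
      show K s s' * (VL s' - Vg s') = _
      ring
    rw [e1, hcross s]
    show _ = (VL s - Vg s) - γ * ∑ s', K s s' * W s'
    rw [hVLs s, e2]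
    ring
  have hPDL : ∑ s, dL s * T s = (1 - γ) * W s₀ := by
    have e1 : ∀ s, dL s * T s = dL s * W s - ∑ s', γ * (dL s * (K s s' * W s')) := by
      intro s
      rw [hTW s, mul_sub]
      congr 1
      rw [Finset.mul_sum, Finset.mul_sum]
      exact Finset.sum_congr rfl fun s' _ => by ring
    have e2 : ∑ s, dL s * T s
        = (∑ s, dL s * W s) - ∑ s', (γ * ∑ s, dL s * K s s') * W s' := by
      rw [Finset.sum_congr rfl fun s _ => e1 s, Finset.sum_sub_distrib]
      congr 1
      rw [Finset.sum_comm]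
      refine Finset.sum_congr rfl fun s' _ => ?_
      rw [Finset.mul_sum, Finset.sum_mul]
      exact Finset.sum_congr rfl fun s _ => by ring
    have hvis : ∀ s', γ * ∑ s, dL s * K s s'
        = dL s' - (1-γ) * (if s' = s₀ then 1 else 0) := by
      intro s'
      have h := hdL s'
      simp only [hK]
      linarith
    have e3 : ∑ s', (dL s' - (1-γ) * (if s' = s₀ then 1 else 0)) * W s'
        = (∑ s', dL s' * W s') - (1-γ) * W s₀ := by
      calc ∑ s', (dL s' - (1-γ) * (if s' = s₀ then 1 else 0)) * W s'
          = ∑ s', (dL s' * W s'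
              - (1-γ) * ((if s' = s₀ then (1:ℝ) else 0) * W s')) := by
            exact Finset.sum_congr rfl fun s' _ => by ring
        _ = (∑ s', dL s' * W s')
              - (1-γ) * ∑ s', (if s' = s₀ then (1:ℝ) else 0) * W s' := by
            rw [Finset.sum_sub_distrib, Finset.mul_sum]
        _ = (∑ s', dL s' * W s') - (1-γ) * W s₀ := by
            congr 1
            rw [mul_eq_mul_left_iff]
            left
            simp [ite_mul]
    have e4 : ∑ s', (γ * ∑ s, dL s * K s s') * W s'
        = ∑ s', (dL s' - (1-γ) * (if s' = s₀ then 1 else 0)) * W s' :=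
      Finset.sum_congr rfl fun s' _ => by rw [hvis s']
    rw [e2, e4, e3]
    ring
  -- bound |T s| ≤ Amax
  have hAgAmax : ∀ s a, |Ag s a| ≤ Amax := by
    intro s a
    rw [hAmax]
    exact Finset.le_sup' (fun p : S × A => |Ag p.1 p.2|) (Finset.mem_univ (s, a))
  have hAmax_nn : 0 ≤ Amax :=
    le_trans (abs_nonneg _) (hAgAmax (Classical.arbitrary S) (Classical.arbitrary A))
  have hTabs : ∀ s, |T s| ≤ Amax := by
    intro s
    calc |T s| ≤ ∑ a, |πL s a * Ag s a| := Finset.abs_sum_le_sum_abs _ _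
      _ = ∑ a, πL s a * |Ag s a| := by
          refine Finset.sum_congr rfl fun a _ => ?_
          rw [abs_mul, abs_of_nonneg (hπL_nn s a)]
      _ ≤ ∑ a, πL s a * Amax :=
          Finset.sum_le_sum fun a _ => mul_le_mul_of_nonneg_left (hAgAmax s a) (hπL_nn s a)
      _ = Amax := by rw [← Finset.sum_mul, hπL_sum s, one_mul]
  have hL1 : ∑ s, |dL s - dg s| ≤ Real.sqrt (2 * ∑ s, dL s * Real.log (dL s / dg s)) :=
    sum_pinsker dL dg hdL_nn hdgpos hsum_dL hsum_dg
  have hlower : (∑ s, dg s * T s) - Amax * ∑ s, |dL s - dg s| ≤ ∑ s, dL s * T s := by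
    have hpt : ∀ s, dg s * T s - Amax * |dL s - dg s| ≤ dL s * T s := by
      intro s
      have h1 : -(|(dL s - dg s) * T s|) ≤ (dL s - dg s) * T s := neg_abs_le _
      have h1' : |(dL s - dg s) * T s| = |dL s - dg s| * |T s| := abs_mul _ _
      have h2 : |dL s - dg s| * |T s| ≤ |dL s - dg s| * Amax :=
        mul_le_mul_of_nonneg_left (hTabs s) (abs_nonneg _)
      have h3 : dL s * T s = dg s * T s + (dL s - dg s) * T s := by ring
      rw [h1'] at h1
      linarith
    calc (∑ s, dg s * T s) - Amax * ∑ s, |dL s - dg s|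
        = ∑ s, (dg s * T s - Amax * |dL s - dg s|) := by
          rw [Finset.sum_sub_distrib, Finset.mul_sum]
      _ ≤ ∑ s, dL s * T s := Finset.sum_le_sum fun s _ => hpt s
  set Sq : ℝ := Real.sqrt (2 * ∑ s, dL s * Real.log (dL s / dg s)) with hSq
  have key : (∑ s, dg s * T s) - Amax * Sq ≤ (1-γ) * W s₀ := by
    have h4 : Amax * ∑ s, |dL s - dg s| ≤ Amax * Sq :=
      mul_le_mul_of_nonneg_left hL1 hAmax_nn
    rw [← hPDL]
    linarith
  have goalform : (1 / (1 - γ)) * (∑ s, dg s * T s) - (Amax / (1 - γ)) * Sq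
      = ((∑ s, dg s * T s) - Amax * Sq) / (1-γ) := by
    field_simp
  show W s₀ ≥ (1 / (1 - γ)) * (∑ s, dg s * T s) - (Amax / (1 - γ)) * Sq
  rw [ge_iff_le, goalform, div_le_iff₀ h1γ]
  nlinarith [key]
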